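/- The operators on W = ⊕_{m ∈ ℤ_{≥0}^n} ℚ(q)|m⟩ defined by e_0|m⟩ = q^{-1}([m_1+1][m_1+2]/[2])|m + 2e_1⟩, f_0|m⟩ = -(q/[2])|m - 2e_1⟩, k_0|m⟩ = q^{2m_1+1}|m⟩ satisfy e_0 f_0 - f_0 e_0 = (k_0 - k_0^{-1})/(q² - q^{-2}). -/

import Mathlib

noncomputable abbrev Kq : Type := RatFunc ℚ
noncomputable abbrev q : Kq := RatFunc.X

/-- The balanced q-integer `[m] = (q^m - q^{-m})/(q - q^{-1})`. -/
noncomputable def qInt (m : ℕ) : Kq :=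
  (q ^ m - q⁻¹ ^ m) / (q - q⁻¹)

/-- The ℚ(q)-vector space `W` with basis `|m⟩`, `m ∈ ℤ_{≥0}^n`. -/
noncomputable abbrev W (n : ℕ) : Type := (Fin n → ℕ) →₀ Kq

/-- The basis vector `|m⟩`. -/
noncomputable def ket {n : ℕ} (m : Fin n → ℕ) : W n := Finsupp.single m 1

/-- Extension of a map defined on basis vectors to an operator on `W`. -/
noncomputable def opOf {n : ℕ} (g : (Fin n → ℕ) → W n) : W n → W n :=
  fun v => v.sum fun m c => c • g m

/-- `e_0 |m⟩ = q^{-1}([m_1+1][m_1+2]/[2]) |m + 2e_1⟩`. -/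
noncomputable def e0 {n : ℕ} (j : Fin n) : W n → W n :=
  opOf fun m =>
    (q⁻¹ * (qInt (m j + 1) * qInt (m j + 2) / qInt 2)) •
      ket (Function.update m j (m j + 2))

/-- `f_0 |m⟩ = -(q/[2]) |m - 2e_1⟩` (zero if `m_1 < 2`). -/
noncomputable def f0 {n : ℕ} (j : Fin n) : W n → W n :=
  opOf fun m =>
    if m j < 2 then 0 else (-(q / qInt 2)) • ket (Function.update m j (m j - 2))

/-- `k_0 |m⟩ = q^{2m_1+1} |m⟩`. -/
noncomputable def k0 {n : ℕ} (j : Fin n) : W n → W n :=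
  opOf fun m => (q ^ (2 * m j + 1)) • ket m

/-- `k_0⁻¹ |m⟩ = q^{-2m_1-1} |m⟩`. -/
noncomputable def k0Inv {n : ℕ} (j : Fin n) : W n → W n :=
  opOf fun m => (q ^ (-(2 * (m j : ℤ) + 1))) • ket m

lemma hq0 : (q : Kq) ≠ 0 := RatFunc.X_ne_zero

lemma hsq1 : (q^2 - 1 : Kq) ≠ 0 := by
  have : (q^2 - 1 : Kq) = algebraMap (Polynomial ℚ) Kq (Polynomial.X^2 - 1) := by
    simp [q, map_sub, map_pow, RatFunc.algebraMap_X]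
  rw [this]
  apply RatFunc.algebraMap_ne_zero
  intro h
  have := congrArg (Polynomial.eval 2) h
  norm_num at this

lemma hsq2 : (q^2 + 1 : Kq) ≠ 0 := by
  have : (q^2 + 1 : Kq) = algebraMap (Polynomial ℚ) Kq (Polynomial.X^2 + 1) := by
    simp [q, map_add, map_pow, RatFunc.algebraMap_X]
  rw [this]
  apply RatFunc.algebraMap_ne_zero
  intro h
  have := congrArg (Polynomial.eval 2) h
  norm_num at this

lemma hsub : (q - q⁻¹ : Kq) ≠ 0 := by
  intro h
  apply hsq1
  have : q * (q - q⁻¹) = q^2 - 1 := by rw [mul_sub, mul_inv_cancel₀ hq0]; ring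
  rw [← this, h, mul_zero]

lemma hadd : (q + q⁻¹ : Kq) ≠ 0 := by
  intro h
  apply hsq2
  have : q * (q + q⁻¹) = q^2 + 1 := by rw [mul_add, mul_inv_cancel₀ hq0]; ring
  rw [← this, h, mul_zero]

lemma qInt_two : qInt 2 = q + q⁻¹ := by
  unfold qInt
  rw [div_eq_iff hsub]
  ring

lemma h41 : (q^4 - 1 : Kq) ≠ 0 := by
  have e : (q^4 - 1 : Kq) = (q^2-1)*(q^2+1) := by ring
  rw [e]; exact mul_ne_zero hsq1 hsq2

lemma hzpow2 : (q:Kq)^(-2:ℤ) = q⁻¹^2 := by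
  rw [zpow_neg, inv_pow]
  norm_cast

lemma hzpowa (a : ℕ) : (q:Kq)^(-(2*(a:ℤ)+1)) = q⁻¹^(2*a+1) := by
  rw [show -(2*(a:ℤ)+1) = -((2*a+1 : ℕ) : ℤ) by push_cast; ring, zpow_neg, zpow_natCast, inv_pow]

lemma qdiff_ne : (q^2 - (q:Kq)^(-2:ℤ)) ≠ 0 := by
  rw [hzpow2]
  have : q^2 - q⁻¹^2 = (q - q⁻¹) * (q + q⁻¹) := by ring
  rw [this]
  exact mul_ne_zero hsub hadd

set_option maxHeartbeats 1000000 in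
lemma S2 (b : ℕ) :
    (-(q / qInt 2)) * (q⁻¹ * (qInt (b+1) * qInt (b+2) / qInt 2)) -
    (q⁻¹ * (qInt (b+2+1) * qInt (b+2+2) / qInt 2)) * (-(q / qInt 2)) =
    (q^2 - q^(-2:ℤ))⁻¹ * (q^(2*(b+2)+1) - q^(-(2*((b+2 : ℕ):ℤ)+1))) := by
  rw [hzpowa, hzpow2, qInt_two]
  unfold qInt
  have hp : ∀ k : ℕ, (q:Kq)^k ≠ 0 := fun k => pow_ne_zero k hq0
  have h1 : (q*q - 1 : Kq) ≠ 0 := by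
    have e : (q*q - 1 : Kq) = q^2 - 1 := by ring
    rw [e]; exact hsq1
  have h2 : (q*q + 1 : Kq) ≠ 0 := by
    have e : (q*q + 1 : Kq) = q^2 + 1 := by ring
    rw [e]; exact hsq2
  have h4 : (q^2*q^2 - 1 : Kq) ≠ 0 := by
    have e : (q^2*q^2 - 1 : Kq) = (q^2-1)*(q^2+1) := by ring
    rw [e]; exact mul_ne_zero hsq1 hsq2
  have hA : (1 - q^4*2 + q^8 : Kq) ≠ 0 := by
    have e : (1 - q^4*2 + q^8 : Kq) = (q^4-1)^2 := by ring
    rw [e]; exact pow_ne_zero _ h41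
  have hB : (-1 + q^4 : Kq) ≠ 0 := by
    have e : (-1 + q^4 : Kq) = q^4-1 := by ring
    rw [e]; exact h41
  simp only [inv_pow]
  field_simp [hp, hq0, hsub, hadd, h1, h2, h4, hA, hB, h41]
  have hDA : (1 - q^4*2 + q^8 : Kq) * (1 - q^4*2 + q^8 : Kq)⁻¹ = 1 := mul_inv_cancel₀ hA
  linear_combination (-(q ^ 10 * q ^ (b * 4)) + q ^ 20 * q ^ (b * 8)) * hDA

lemma S0 :
    (0 : Kq) - (q⁻¹ * (qInt (0+1) * qInt (0+2) / qInt 2)) * (-(q / qInt 2)) =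
    (q^2 - q^(-2:ℤ))⁻¹ * (q^(2*0+1) - q^(-(2*((0 : ℕ):ℤ)+1))) := by
  rw [hzpowa, hzpow2, qInt_two]
  unfold qInt
  have hp : ∀ k : ℕ, (q:Kq)^k ≠ 0 := fun k => pow_ne_zero k hq0
  have h1 : (q*q - 1 : Kq) ≠ 0 := by
    have e : (q*q - 1 : Kq) = q^2 - 1 := by ring
    rw [e]; exact hsq1
  have h2 : (q*q + 1 : Kq) ≠ 0 := by
    have e : (q*q + 1 : Kq) = q^2 + 1 := by ring
    rw [e]; exact hsq2
  have h4 : (q^2*q^2 - 1 : Kq) ≠ 0 := by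
    have e : (q^2*q^2 - 1 : Kq) = (q^2-1)*(q^2+1) := by ring
    rw [e]; exact mul_ne_zero hsq1 hsq2
  field_simp [hp, hq0, hsub, hadd, h1, h2, h4]
  ring

set_option maxHeartbeats 1000000 in
lemma S1 :
    (0 : Kq) - (q⁻¹ * (qInt (1+1) * qInt (1+2) / qInt 2)) * (-(q / qInt 2)) =
    (q^2 - q^(-2:ℤ))⁻¹ * (q^(2*1+1) - q^(-(2*((1 : ℕ):ℤ)+1))) := by
  rw [hzpowa, hzpow2, qInt_two]
  unfold qInt
  have hp : ∀ k : ℕ, (q:Kq)^k ≠ 0 := fun k => pow_ne_zero k hq0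
  have h1 : (q*q - 1 : Kq) ≠ 0 := by
    have e : (q*q - 1 : Kq) = q^2 - 1 := by ring
    rw [e]; exact hsq1
  have h2 : (q*q + 1 : Kq) ≠ 0 := by
    have e : (q*q + 1 : Kq) = q^2 + 1 := by ring
    rw [e]; exact hsq2
  have h4 : (q^2*q^2 - 1 : Kq) ≠ 0 := by
    have e : (q^2*q^2 - 1 : Kq) = (q^2-1)*(q^2+1) := by ring
    rw [e]; exact mul_ne_zero hsq1 hsq2
  field_simp [hp, hq0, hsub, hadd, h1, h2, h4]
  ring

lemma opOf_zero {n : ℕ} (g : (Fin n → ℕ) → W n) : opOf g 0 = 0 :=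
  Finsupp.sum_zero_index

lemma opOf_add {n : ℕ} (g : (Fin n → ℕ) → W n) (v w : W n) :
    opOf g (v + w) = opOf g v + opOf g w :=
  Finsupp.sum_add_index' (fun m => zero_smul _ _) (fun m a b => add_smul a b _)

lemma opOf_smul {n : ℕ} (g : (Fin n → ℕ) → W n) (c : Kq) (v : W n) :
    opOf g (c • v) = c • opOf g v := by
  unfold opOf
  rw [Finsupp.sum_smul_index]
  · rw [Finsupp.smul_sum]
    exact Finsupp.sum_congr fun i _ => mul_smul _ _ _
  · exact fun i => zero_smul _ _

lemma opOf_ket {n : ℕ} (g : (Fin n → ℕ) → W n) (m : Fin n → ℕ) :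
    opOf g (ket m) = g m := by
  unfold opOf ket
  rw [Finsupp.sum_single_index]
  · exact one_smul _ _
  · exact zero_smul _ _

section OpLemmas
variable {n : ℕ} (j : Fin n)

lemma e0_zero : e0 j (0 : W n) = 0 := opOf_zero _
lemma f0_zero : f0 j (0 : W n) = 0 := opOf_zero _
lemma k0_zero : k0 j (0 : W n) = 0 := opOf_zero _
lemma k0Inv_zero : k0Inv j (0 : W n) = 0 := opOf_zero _

lemma e0_add (v w : W n) : e0 j (v + w) = e0 j v + e0 j w := opOf_add _ v w
lemma f0_add (v w : W n) : f0 j (v + w) = f0 j v + f0 j w := opOf_add _ v w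
lemma k0_add (v w : W n) : k0 j (v + w) = k0 j v + k0 j w := opOf_add _ v w
lemma k0Inv_add (v w : W n) : k0Inv j (v + w) = k0Inv j v + k0Inv j w := opOf_add _ v w

lemma e0_smul (c : Kq) (v : W n) : e0 j (c • v) = c • e0 j v := opOf_smul _ c v
lemma f0_smul (c : Kq) (v : W n) : f0 j (c • v) = c • f0 j v := opOf_smul _ c v
lemma k0_smul (c : Kq) (v : W n) : k0 j (c • v) = c • k0 j v := opOf_smul _ c v
lemma k0Inv_smul (c : Kq) (v : W n) : k0Inv j (c • v) = c • k0Inv j v := opOf_smul _ c v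

lemma e0_ket (m : Fin n → ℕ) :
    e0 j (ket m) = (q⁻¹ * (qInt (m j + 1) * qInt (m j + 2) / qInt 2)) •
      ket (Function.update m j (m j + 2)) := opOf_ket _ m
lemma f0_ket (m : Fin n → ℕ) :
    f0 j (ket m) = if m j < 2 then 0 else
      (-(q / qInt 2)) • ket (Function.update m j (m j - 2)) := opOf_ket _ m
lemma k0_ket (m : Fin n → ℕ) : k0 j (ket m) = (q ^ (2 * m j + 1)) • ket m := opOf_ket _ m
lemma k0Inv_ket (m : Fin n → ℕ) :
    k0Inv j (ket m) = (q ^ (-(2 * (m j : ℤ) + 1))) • ket m := opOf_ket _ m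

end OpLemmas

lemma sub_add_comb {M : Type*} [AddCommGroup M] (a b a' b' : M) :
    (a + a') - (b + b') = (a - b) + (a' - b') := by abel

lemma ket_case {n : ℕ} (j : Fin n) (m : Fin n → ℕ) :
    e0 j (f0 j (ket m)) - f0 j (e0 j (ket m)) =
      ((q ^ 2 - q ^ (-2 : ℤ))⁻¹ : Kq) • (k0 j (ket m) - k0Inv j (ket m)) := by
  obtain hmj | hmj | hge : m j = 0 ∨ m j = 1 ∨ 2 ≤ m j := by omega
  · have h2up : Function.update m j 0 = m := by rw [← hmj]; exact Function.update_eq_self j m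
    rw [f0_ket, e0_ket, k0_ket, k0Inv_ket, hmj]
    rw [if_pos (by norm_num), e0_zero, f0_smul, f0_ket]
    simp only [Function.update_self, Function.update_idem, Nat.add_sub_cancel]
    rw [if_neg (by norm_num), h2up]
    rw [smul_smul, ← sub_smul, smul_smul, zero_sub, ← neg_smul]
    have s := S0
    rw [zero_sub] at s
    rw [s]
  · have h2up : Function.update m j 1 = m := by rw [← hmj]; exact Function.update_eq_self j m
    rw [f0_ket, e0_ket, k0_ket, k0Inv_ket, hmj]
    rw [if_pos (by norm_num), e0_zero, f0_smul, f0_ket]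
    simp only [Function.update_self, Function.update_idem, Nat.add_sub_cancel]
    rw [if_neg (by norm_num), h2up]
    rw [smul_smul, ← sub_smul, smul_smul, zero_sub, ← neg_smul]
    have s := S1
    rw [zero_sub] at s
    rw [s]
  · obtain ⟨b, hmj⟩ : ∃ b, m j = b + 2 := ⟨m j - 2, by omega⟩
    have h2up : Function.update m j (b + 2) = m := by
      rw [← hmj]; exact Function.update_eq_self j m
    rw [f0_ket, e0_ket, k0_ket, k0Inv_ket, hmj]
    rw [if_neg (by omega), e0_smul, e0_ket, f0_smul, f0_ket]
    simp only [Function.update_self, Function.update_idem, Nat.add_sub_cancel]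
    rw [if_neg (by omega), h2up]
    rw [smul_smul, smul_smul, ← sub_smul, ← sub_smul, smul_smul, S2 b]

/-- the node-0 operators of the level-one q-oscillator representation
of `U_q(C_n^{(1)})` satisfy `e_0 f_0 - f_0 e_0 = (k_0 - k_0^{-1})/(q² - q^{-2})` on `W`. -/
theorem sl2_relation_node_zero (n : ℕ) (hn : 0 < n) (v : W n) :
    e0 ⟨0, hn⟩ (f0 ⟨0, hn⟩ v) - f0 ⟨0, hn⟩ (e0 ⟨0, hn⟩ v) =
      ((q ^ 2 - q ^ (-2 : ℤ))⁻¹ : Kq) • (k0 ⟨0, hn⟩ v - k0Inv ⟨0, hn⟩ v) := by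
  induction v using Finsupp.induction_linear with
  | zero =>
      rw [f0_zero, e0_zero, f0_zero, k0_zero, k0Inv_zero]
      simp
  | add f g hf hg =>
      rw [f0_add, e0_add, e0_add, f0_add, k0_add, k0Inv_add, sub_add_comb, hf, hg,
        ← smul_add, ← sub_add_comb]
  | single m c =>
      have h1 : (Finsupp.single m c : W n) = c • ket m := by
        rw [ket, Finsupp.smul_single, smul_eq_mul, mul_one]
      rw [h1, f0_smul, e0_smul, e0_smul, f0_smul, k0_smul, k0Inv_smul,
        ← smul_sub, ← smul_sub, smul_comm ((q ^ 2 - q ^ (-2 : ℤ))⁻¹ : Kq) c, ket_case]
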